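/- Let A be a C*-algebra, B ⊆ A a hereditary subalgebra, and a ∈ B a positive element. Suppose there is a nonzero positive x ∈ A with a ⊕ x ≾ a in M₂(A) (Cuntz subequivalence). Then there is a nonzero positive y ∈ B with a ⊕ y ≾ a in M₂(B). -/

import Mathlib

variable {A : Type*} [NonUnitalCStarAlgebra A] [PartialOrder A] [StarOrderedRing A]

/-- A hereditary subalgebra of a C*-algebra. -/
def IsHereditarySubalgebra (A : Type*) [NonUnitalCStarAlgebra A] [PartialOrder A]
    [StarOrderedRing A] (D : Set A) : Prop :=
  IsClosed D ∧ (0 : A) ∈ D ∧ (∀ x ∈ D, ∀ y ∈ D, x + y ∈ D) ∧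
    (∀ (c : ℂ), ∀ x ∈ D, c • x ∈ D) ∧ (∀ x ∈ D, ∀ y ∈ D, x * y ∈ D) ∧
    (∀ x ∈ D, star x ∈ D) ∧
    (∀ x ∈ D, ∀ y : A, 0 ≤ y → y ≤ x → y ∈ D)

/-- `diag a x` is the diagonal 2×2 matrix with entries `a, x`; this realizes `a ⊕ x`. -/
noncomputable def diag2 (a x : A) : Matrix (Fin 2) (Fin 2) A := Matrix.diagonal ![a, x]

/-- Cuntz subequivalence `c ≾ d` in `M₂`, computed with conjugating matrices whose
entries lie in the subset `S` (i.e. in `M₂(S)`), expressed entrywise. -/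
def CuntzLE2 (S : Set A) (c d : Matrix (Fin 2) (Fin 2) A) : Prop :=
  ∀ ε : ℝ, 0 < ε → ∃ v : Matrix (Fin 2) (Fin 2) A, (∀ i j, v i j ∈ S) ∧
    ∀ i j, ‖(v * d * star v - c) i j‖ < ε

section StmtAux

variable {B : Set A} (hB : IsHereditarySubalgebra A B)

include hB

private lemma her_smulR {w : A} (hw : w ∈ B) (r : ℝ) : r • w ∈ B := by
  have := hB.2.2.2.1 (r : ℂ) w hw
  rwa [Complex.coe_smul] at this

private lemma her_sub {w z : A} (hw : w ∈ B) (hz : z ∈ B) : w - z ∈ B := by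
  have h := hB.2.2.1 w hw _ (hB.2.2.2.1 (-1 : ℂ) z hz)
  rwa [neg_one_smul, ← sub_eq_add_neg] at h

private lemma her_conj_nonneg {e : A} (he : e ∈ B) {z : A} (hz : 0 ≤ z) :
    star e * z * e ∈ B := by
  refine hB.2.2.2.2.2.2 (‖z‖ • (star e * e)) ?_ _ (star_left_conjugate_nonneg hz e)
    (CStarAlgebra.star_left_conjugate_le_norm_smul hz.isSelfAdjoint)
  exact her_smulR hB (hB.2.2.2.2.1 _ (hB.2.2.2.2.2.1 e he) _ he) ‖z‖

private lemma her_conj {e : A} (he : e ∈ B) (z : A) : star e * z * e ∈ B := by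
  have hz := CStarAlgebra.linear_combination_nonneg z
  have expand : star e * z * e
      = (star e * ((realPart z : A)⁺) * e - star e * ((realPart z : A)⁻) * e)
        + (Complex.I • (star e * ((imaginaryPart z : A)⁺) * e)
            - Complex.I • (star e * ((imaginaryPart z : A)⁻) * e)) := by
    conv_lhs => rw [← hz]
    simp [mul_add, add_mul, mul_sub, sub_mul, mul_smul_comm, smul_mul_assoc, smul_sub]
  rw [expand]
  have m1 := her_conj_nonneg hB he (CFC.posPart_nonneg (realPart z : A))
  have m2 := her_conj_nonneg hB he (CFC.negPart_nonneg (realPart z : A))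
  have m3 := her_conj_nonneg hB he (CFC.posPart_nonneg (imaginaryPart z : A))
  have m4 := her_conj_nonneg hB he (CFC.negPart_nonneg (imaginaryPart z : A))
  exact hB.2.2.1 _ (her_sub hB m1 m2) _
    (her_sub hB (hB.2.2.2.1 _ _ m3) (hB.2.2.2.1 _ _ m4))

private lemma her_conj₂ {e₁ e₂ : A} (he₁ : e₁ ∈ B) (he₂ : e₂ ∈ B) (z : A) :
    star e₁ * z * e₂ ∈ B := by
  have hpol : star e₁ * z * e₂ = ((1:ℂ)/2) • ((star (e₁ + e₂) * z * (e₁ + e₂))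
      + (-Complex.I) • (star (e₁ + Complex.I • e₂) * z * (e₁ + Complex.I • e₂))
      - ((1:ℂ) - Complex.I) • (star e₁ * z * e₁ + star e₂ * z * e₂)) := by
    simp only [star_add, star_smul, Complex.star_def, Complex.conj_I, mul_add, add_mul,
      smul_mul_assoc, mul_smul_comm, smul_smul, smul_add, smul_sub, sub_mul, neg_smul, neg_mul,
      Complex.I_mul_I, neg_neg, one_smul, neg_sub]
    match_scalars <;> simp [Complex.I_sq] <;> ring
  rw [hpol]
  have m1 := her_conj hB (hB.2.2.1 _ he₁ _ he₂) z
  have m2 := her_conj hB (hB.2.2.1 _ he₁ _ (hB.2.2.2.1 Complex.I _ he₂)) z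
  have m3 := hB.2.2.1 _ (her_conj hB he₁ z) _ (her_conj hB he₂ z)
  exact hB.2.2.2.1 _ _ (her_sub hB (hB.2.2.1 _ m1 _ (hB.2.2.2.1 _ _ m2)) (hB.2.2.2.1 _ _ m3))

private lemma her_mul₃ {e₁ e₂ : A} (he₁ : e₁ ∈ B) (he₂ : e₂ ∈ B) (z : A) :
    e₁ * z * e₂ ∈ B := by
  have := her_conj₂ hB (hB.2.2.2.2.2.1 e₁ he₁) he₂ z
  rwa [star_star] at this

private lemma her_cfcₙ {a : A} (haB : a ∈ B) (f : ℝ → ℝ) : cfcₙ f a ∈ B := by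
  refine cfcₙ_cases (· ∈ B) a f hB.2.1 fun hf hf0 ha => ?_
  have hz : ((0 : quasispectrum ℝ a) : ℝ) = 0 := rfl
  have hid : (ContinuousMapZero.id (quasispectrum ℝ a))
      = (⟨(ContinuousMap.id ℝ).restrict <| quasispectrum ℝ a, rfl⟩ :
        ContinuousMapZero (quasispectrum ℝ a) ℝ) := rfl
  have hstarid : star (ContinuousMapZero.id (quasispectrum ℝ a)) = ContinuousMapZero.id (quasispectrum ℝ a) := by
    ext s; simp
  have key : ∀ g : ContinuousMapZero (quasispectrum ℝ a) ℝ, cfcₙHom ha g ∈ B := by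
    intro g
    induction g using ContinuousMapZero.induction_on_of_compact with
    | zero => simpa using hB.2.1
    | id => rw [cfcₙHom_id ha]; exact haB
    | star_id => rw [hstarid, cfcₙHom_id ha]; exact haB
    | add g₁ g₂ h₁ h₂ => rw [map_add]; exact hB.2.2.1 _ h₁ _ h₂
    | mul g₁ g₂ h₁ h₂ => rw [map_mul]; exact hB.2.2.2.2.1 _ h₁ _ h₂
    | smul c g hg => rw [map_smul]; exact her_smulR hB hg c
    | frequently g hg => exact hg.mem_of_closed (hB.1.preimage (cfcₙHom_continuous ha))
  exact key _

private lemma her_approxUnit {a : A} (haB : a ∈ B) (ha : 0 ≤ a) {η : ℝ} (hη : 0 < η) :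
    ∃ r, r ∈ B ∧ star r = r ∧ ‖r‖ ≤ 1 ∧ ‖r * a * r - a‖ < η := by
  set t : ℝ := max (2/η) 1 with ht_def
  have ht1 : (1:ℝ) ≤ t := le_max_right _ _
  have ht0 : (0:ℝ) < t := lt_of_lt_of_le one_pos ht1
  have htη : 1/t ≤ η/2 := by
    rw [div_le_div_iff₀ ht0 two_pos]
    have h2 : 2/η ≤ t := le_max_left _ _
    calc (1:ℝ)*2 = 2 := one_mul 2
      _ = η * (2/η) := by field_simp
      _ ≤ η * t := by gcongr
  set f : ℝ → ℝ := fun s => min 1 (t * max s 0) with hf_def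
  have hfc : Continuous f :=
    continuous_const.min (continuous_const.mul (continuous_id.max continuous_const))
  have hf0 : f 0 = 0 := by simp [hf_def]
  have hf01 : ∀ s, 0 ≤ s → 0 ≤ f s ∧ f s ≤ 1 := fun s hs =>
    ⟨le_min (by norm_num) (by positivity), min_le_left _ _⟩
  refine ⟨cfcₙ f a, her_cfcₙ hB haB f, (cfcₙ_predicate f a).star_eq, ?_, ?_⟩
  · refine norm_cfcₙ_le fun s hs => ?_
    have hs0 : 0 ≤ s := quasispectrum_nonneg_of_nonneg a ha s hs
    rw [Real.norm_eq_abs, abs_le]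
    exact ⟨by linarith [(hf01 s hs0).1], (hf01 s hs0).2⟩
  · have hsa : IsSelfAdjoint a := ha.isSelfAdjoint
    have key : cfcₙ f a * a * cfcₙ f a - a = cfcₙ (fun s => f s * s * f s - s) a := by
      have h1 : cfcₙ (fun s => f s * s * f s - s) a
          = cfcₙ (fun s => f s * s * f s) a - cfcₙ (fun s : ℝ => s) a :=
        cfcₙ_sub _ _ a (by fun_prop) (by simp [hf0]) (by fun_prop) rfl
      have h2 : cfcₙ (fun s => f s * s * f s) a
          = cfcₙ (fun s : ℝ => f s * s) a * cfcₙ f a :=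
        cfcₙ_mul _ _ a (by fun_prop) (by simp [hf0]) (by fun_prop) (by simp [hf0])
      have h3 : cfcₙ (fun s : ℝ => f s * s) a = cfcₙ f a * cfcₙ (fun s : ℝ => s) a :=
        cfcₙ_mul _ _ a (by fun_prop) (by simp [hf0]) (by fun_prop) rfl
      rw [h1, h2, h3, cfcₙ_id' ℝ a]
    rw [key]
    have hb : ∀ s ∈ quasispectrum ℝ a, ‖f s * s * f s - s‖ ≤ η/2 := by
      intro s hs
      have hs0 : 0 ≤ s := quasispectrum_nonneg_of_nonneg a ha s hs
      have hmax : max s 0 = s := max_eq_left hs0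
      rcases le_or_gt 1 (t*s) with h | h
      · have h1 : f s = 1 := by rw [hf_def]; simp only [hmax]; exact min_eq_left h
        simp [h1]; positivity
      · have hfs : f s = t * s := by rw [hf_def]; simp only [hmax]; exact min_eq_right h.le
        rw [hfs, Real.norm_eq_abs, abs_le]
        have hts : t * s ≤ 1 := h.le
        have hst : s ≤ 1/t := by rw [le_div_iff₀ ht0]; linarith [mul_comm t s]
        have h1 : (0:ℝ) ≤ t*s := by positivity
        have e2 : (t*s)*(t*s) ≤ 1 := mul_le_one₀ hts h1 hts
        have e3 : s*((t*s)*(t*s)) ≤ s*1 := mul_le_mul_of_nonneg_left e2 hs0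
        have e4 : 0 ≤ s*((t*s)*(t*s)) := by positivity
        have e5 : t*s*s*(t*s) = s*((t*s)*(t*s)) := by ring
        constructor
        · rw [e5]; linarith
        · rw [e5]; linarith
    calc ‖cfcₙ (fun s => f s * s * f s - s) a‖ ≤ η/2 := norm_cfcₙ_le hb
      _ < η := by linarith

end StmtAux

private lemma entry_eq' (a : A) (v : Matrix (Fin 2) (Fin 2) A) (i j : Fin 2) :
    (v * diag2 a 0 * star v) i j = v i 0 * a * star (v j 0) := by
  simp [diag2, Matrix.mul_apply, Fin.sum_univ_two, Matrix.star_apply,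
    Matrix.diagonal, Matrix.of_apply]

private lemma norm_mul3_le' (p m q : A) : ‖p * m * q‖ ≤ ‖p‖ * ‖m‖ * ‖q‖ :=
  (norm_mul_le _ _).trans (mul_le_mul_of_nonneg_right (norm_mul_le p m) (norm_nonneg q))

set_option maxHeartbeats 2000000 in
/-- If `B ⊆ A` is hereditary, `a ∈ B` is positive, and `a ⊕ x ≾ a` in `M₂(A)` for some
nonzero positive `x ∈ A`, then `a ⊕ y ≾ a` in `M₂(B)` for some nonzero positive `y ∈ B`. -/
theorem stmt18 (B : Set A) (hB : IsHereditarySubalgebra A B)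
    (a : A) (haB : a ∈ B) (ha : 0 ≤ a)
    (x : A) (hx0 : 0 ≤ x) (hxne : x ≠ 0)
    (hsub : CuntzLE2 (Set.univ : Set A) (diag2 a x) (diag2 a 0)) :
    ∃ y ∈ B, 0 ≤ y ∧ y ≠ 0 ∧ CuntzLE2 B (diag2 a y) (diag2 a 0) := by
  have hM : 0 < ‖x‖ := norm_pos_iff.mpr hxne
  obtain ⟨V, -, hV⟩ := hsub (‖x‖/2) (by positivity)
  set u : A := V 1 0 with hu
  have hVb : ‖u * a * star u - x‖ < ‖x‖/2 := by
    have h := hV 1 1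
    rwa [Matrix.sub_apply, entry_eq', show (diag2 a x) 1 1 = x by simp [diag2]] at h
  have hsa : star a = a := ha.isSelfAdjoint.star_eq
  set y : A := star (u * a) * x * (u * a) with hy
  have hyL : y = a * (star u * x * u) * a := by
    rw [hy, star_mul, hsa]; noncomm_ring
  have hy0 : 0 ≤ y := star_left_conjugate_nonneg hx0 _
  have hyB : y ∈ B := hyL ▸ her_mul₃ hB haB haB _
  have hyne : y ≠ 0 := by
    intro h0
    have hsq : CFC.sqrt x * CFC.sqrt x = x := CFC.sqrt_mul_sqrt_self x hx0
    have hss : star (CFC.sqrt x) = CFC.sqrt x := (CFC.sqrt_nonneg (a := x)).isSelfAdjoint.star_eq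
    have hms : star (CFC.sqrt x * (u * a)) * (CFC.sqrt x * (u * a)) = y := by
      rw [star_mul, hss, hy]
      calc star (u*a) * CFC.sqrt x * (CFC.sqrt x * (u*a))
          = star (u*a) * (CFC.sqrt x * CFC.sqrt x) * (u*a) := by noncomm_ring
        _ = star (u*a) * x * (u*a) := by rw [hsq]
    have hm0 : CFC.sqrt x * (u * a) = 0 := by
      rw [← CStarRing.star_mul_self_eq_zero_iff, hms, h0]
    have hxb : x * (u * a * star u) = 0 := by
      have hs : CFC.sqrt x * (u * a * star u) = 0 := by
        calc CFC.sqrt x * (u * a * star u) = (CFC.sqrt x * (u * a)) * star u := by noncomm_ring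
          _ = 0 := by rw [hm0, zero_mul]
      calc x * (u * a * star u) = CFC.sqrt x * CFC.sqrt x * (u * a * star u) := by rw [hsq]
        _ = CFC.sqrt x * (CFC.sqrt x * (u * a * star u)) := by rw [mul_assoc]
        _ = 0 := by rw [hs, mul_zero]
    have hxx : ‖x * x‖ = ‖x‖ * ‖x‖ := by
      conv_lhs => rw [show x * x = star x * x by rw [hx0.isSelfAdjoint.star_eq]]
      exact CStarRing.norm_star_mul_self
    have hlt : ‖x * x‖ < ‖x‖ * (‖x‖/2) := by
      calc ‖x * x‖ = ‖x * (x - u * a * star u)‖ := by rw [mul_sub, hxb, sub_zero]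
        _ ≤ ‖x‖ * ‖x - u * a * star u‖ := norm_mul_le _ _
        _ < ‖x‖ * (‖x‖/2) := by
            refine mul_lt_mul_of_pos_left ?_ hM
            rw [← norm_neg]; simpa [neg_sub] using hVb
    rw [hxx] at hlt
    nlinarith
  refine ⟨y, hyB, hy0, hyne, ?_⟩
  intro ε hε
  set L : A := a * star u with hL
  have hLstar : star L = u * a := by rw [hL, star_mul, star_star, hsa]
  set C : ℝ := ‖L‖ with hC
  have hC0 : 0 ≤ C := norm_nonneg _
  set K : ℝ := C^2 + C + 1 with hKdef
  have hK1 : (1:ℝ) ≤ K := by nlinarith [sq_nonneg C]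
  have hKpos : (0:ℝ) < K := lt_of_lt_of_le one_pos hK1
  have hCK : C ≤ K := by nlinarith [sq_nonneg C]
  have hC2K : C^2 ≤ K := by nlinarith
  set δ : ℝ := ε/(4*K) with hδdef
  have hδpos : 0 < δ := by positivity
  obtain ⟨W, -, hW⟩ := hsub δ hδpos
  set v₀ : A := W 0 0 with hv₀
  set v₁ : A := W 1 0 with hv₁
  have h00 : ‖v₀ * a * star v₀ - a‖ < δ := by
    have h := hW 0 0
    rwa [Matrix.sub_apply, entry_eq', show (diag2 a x) 0 0 = a by simp [diag2]] at h
  have h11 : ‖v₁ * a * star v₁ - x‖ < δ := by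
    have h := hW 1 1
    rwa [Matrix.sub_apply, entry_eq', show (diag2 a x) 1 1 = x by simp [diag2]] at h
  have h01 : ‖v₀ * a * star v₁‖ < δ := by
    have h := hW 0 1
    rwa [Matrix.sub_apply, entry_eq', show (diag2 a x) 0 1 = 0 by simp [diag2], sub_zero] at h
  have h10 : ‖v₁ * a * star v₀‖ < δ := by
    have h := hW 1 0
    rwa [Matrix.sub_apply, entry_eq', show (diag2 a x) 1 0 = 0 by simp [diag2], sub_zero] at h
  set D : ℝ := ‖v₀‖^2 + ‖v₁‖^2 + ‖v₀‖*‖v₁‖ + 1 with hDdef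
  have hD1 : (1:ℝ) ≤ D := by nlinarith [norm_nonneg v₀, norm_nonneg v₁, sq_nonneg ‖v₀‖, sq_nonneg ‖v₁‖, mul_nonneg (norm_nonneg v₀) (norm_nonneg v₁)]
  have hDpos : (0:ℝ) < D := lt_of_lt_of_le one_pos hD1
  have hv₀D : ‖v₀‖^2 + 1 ≤ D := by nlinarith [norm_nonneg v₀, norm_nonneg v₁, sq_nonneg ‖v₁‖]
  have hv₁D : ‖v₁‖^2 ≤ D := by nlinarith [norm_nonneg v₀, norm_nonneg v₁, sq_nonneg ‖v₀‖]
  have hv01D : ‖v₀‖*‖v₁‖ ≤ D := by nlinarith [norm_nonneg v₀, norm_nonneg v₁, sq_nonneg ‖v₀‖, sq_nonneg ‖v₁‖]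
  set η : ℝ := ε/(4*K*D) with hηdef
  have hηpos : 0 < η := by positivity
  have hKDη : (K*D)*η = ε/4 := by rw [hηdef]; field_simp
  have hKδ : K*δ = ε/4 := by rw [hδdef]; field_simp
  obtain ⟨r, hrB, hrstar, hrnorm, hrapp⟩ := her_approxUnit hB haB ha hηpos
  have hra : ‖r * a * r - a‖ ≤ η := hrapp.le
  set w₀ : A := r * v₀ * r with hw₀
  set w₁ : A := a * (star u * v₁) * r with hw₁
  have hw₀B : w₀ ∈ B := her_mul₃ hB hrB hrB _
  have hw₁B : w₁ ∈ B := her_mul₃ hB haB hrB _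
  -- auxiliary norm facts
  have hrv₀ : ‖r * v₀‖ ≤ ‖v₀‖ := by
    calc ‖r * v₀‖ ≤ ‖r‖ * ‖v₀‖ := norm_mul_le _ _
      _ ≤ 1 * ‖v₀‖ := mul_le_mul_of_nonneg_right hrnorm (norm_nonneg _)
      _ = ‖v₀‖ := one_mul _
  have hv₀r : ‖star v₀ * r‖ ≤ ‖v₀‖ := by
    calc ‖star v₀ * r‖ ≤ ‖star v₀‖ * ‖r‖ := norm_mul_le _ _
      _ ≤ ‖v₀‖ * 1 := by rw [norm_star]; exact mul_le_mul_of_nonneg_left hrnorm (norm_nonneg _)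
      _ = ‖v₀‖ := mul_one _
  have hLv₁ : ‖L * v₁‖ ≤ C * ‖v₁‖ := norm_mul_le _ _
  have hv₁L : ‖star v₁ * star L‖ ≤ ‖v₁‖ * C := by
    calc ‖star v₁ * star L‖ ≤ ‖star v₁‖ * ‖star L‖ := norm_mul_le _ _
      _ = ‖v₁‖ * C := by rw [norm_star, norm_star]
  have hv₀L : ‖star v₀ * r‖ ≤ ‖v₀‖ := hv₀r
  -- the four entry estimates
  have G00 : ‖w₀ * a * star w₀ - a‖ < ε := by
    have key : w₀ * a * star w₀ - a
        = (r * v₀) * (r * a * r - a) * (star v₀ * r)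
          + r * (v₀ * a * star v₀ - a) * r + (r * a * r - a) := by
      rw [hw₀]; simp only [star_mul, hrstar]; noncomm_ring
    rw [key]
    have b1 : ‖(r * v₀) * (r * a * r - a) * (star v₀ * r)‖ ≤ ‖v₀‖ * η * ‖v₀‖ := by
      refine (norm_mul3_le' _ _ _).trans ?_
      exact mul_le_mul (mul_le_mul hrv₀ hra (norm_nonneg _) (norm_nonneg _)) hv₀r
        (norm_nonneg _) (by positivity)
    have b2 : ‖r * (v₀ * a * star v₀ - a) * r‖ ≤ 1 * δ * 1 := by
      refine (norm_mul3_le' _ _ _).trans ?_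
      exact mul_le_mul (mul_le_mul hrnorm h00.le (norm_nonneg _) zero_le_one) hrnorm
        (norm_nonneg _) (by positivity)
    calc ‖(r * v₀) * (r * a * r - a) * (star v₀ * r)
          + r * (v₀ * a * star v₀ - a) * r + (r * a * r - a)‖
        ≤ ‖(r * v₀) * (r * a * r - a) * (star v₀ * r)‖
          + ‖r * (v₀ * a * star v₀ - a) * r‖ + ‖r * a * r - a‖ := norm_add₃_le
      _ ≤ ‖v₀‖ * η * ‖v₀‖ + 1 * δ * 1 + η := by
          refine add_le_add (add_le_add b1 b2) hra
      _ < ε := by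
          have s1 : ‖v₀‖ * η * ‖v₀‖ + η ≤ ε/4 := by
            have e1 : ‖v₀‖ * η * ‖v₀‖ + η = (‖v₀‖^2 + 1) * η := by ring
            have e2 : (‖v₀‖^2 + 1) * η ≤ (K*D) * η := by
              refine mul_le_mul_of_nonneg_right ?_ hηpos.le
              calc ‖v₀‖^2 + 1 ≤ D := hv₀D
                _ ≤ K*D := le_mul_of_one_le_left hDpos.le hK1
            rw [e1]; rw [← hKDη]; exact e2
          have s2 : (1:ℝ) * δ * 1 ≤ ε/4 := by
            rw [one_mul, mul_one, ← hKδ]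
            exact le_mul_of_one_le_left hδpos.le hK1
          linarith
  have G11 : ‖w₁ * a * star w₁ - y‖ < ε := by
    have key : w₁ * a * star w₁ - y
        = (L * v₁) * (r * a * r - a) * (star v₁ * star L)
          + L * (v₁ * a * star v₁ - x) * star L := by
      rw [hw₁, hy, hL]
      simp only [star_mul, star_star, hrstar, hsa]
      noncomm_ring
    rw [key]
    have b1 : ‖(L * v₁) * (r * a * r - a) * (star v₁ * star L)‖ ≤ (C*‖v₁‖) * η * (‖v₁‖*C) := by
      refine (norm_mul3_le' _ _ _).trans ?_
      exact mul_le_mul (mul_le_mul hLv₁ hra (norm_nonneg _) (by positivity)) hv₁L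
        (norm_nonneg _) (by positivity)
    have b2 : ‖L * (v₁ * a * star v₁ - x) * star L‖ ≤ C * δ * C := by
      refine (norm_mul3_le' _ _ _).trans ?_
      have : ‖star L‖ = C := norm_star L
      rw [this]
      exact mul_le_mul_of_nonneg_right
        (mul_le_mul_of_nonneg_left h11.le hC0) hC0
    calc ‖(L * v₁) * (r * a * r - a) * (star v₁ * star L)
          + L * (v₁ * a * star v₁ - x) * star L‖
        ≤ ‖(L * v₁) * (r * a * r - a) * (star v₁ * star L)‖
          + ‖L * (v₁ * a * star v₁ - x) * star L‖ := norm_add_le _ _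
      _ ≤ (C*‖v₁‖) * η * (‖v₁‖*C) + C * δ * C := add_le_add b1 b2
      _ < ε := by
          have s1 : (C*‖v₁‖) * η * (‖v₁‖*C) ≤ ε/4 := by
            have e1 : (C*‖v₁‖) * η * (‖v₁‖*C) = (C^2 * ‖v₁‖^2) * η := by ring
            have e2 : C^2 * ‖v₁‖^2 ≤ K*D :=
              mul_le_mul hC2K hv₁D (sq_nonneg _) hKpos.le
            rw [e1, ← hKDη]
            exact mul_le_mul_of_nonneg_right e2 hηpos.le
          have s2 : C * δ * C ≤ ε/4 := by
            have e1 : C * δ * C = (C^2) * δ := by ring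
            rw [e1, ← hKδ]
            exact mul_le_mul_of_nonneg_right hC2K hδpos.le
          linarith
  have G01 : ‖w₀ * a * star w₁‖ < ε := by
    have key : w₀ * a * star w₁
        = (r * v₀) * (r * a * r - a) * (star v₁ * star L)
          + r * (v₀ * a * star v₁) * star L := by
      rw [hw₀, hw₁, hL]
      simp only [star_mul, star_star, hrstar, hsa]
      noncomm_ring
    rw [key]
    have b1 : ‖(r * v₀) * (r * a * r - a) * (star v₁ * star L)‖ ≤ ‖v₀‖ * η * (‖v₁‖*C) := by
      refine (norm_mul3_le' _ _ _).trans ?_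
      exact mul_le_mul (mul_le_mul hrv₀ hra (norm_nonneg _) (norm_nonneg _)) hv₁L
        (norm_nonneg _) (by positivity)
    have b2 : ‖r * (v₀ * a * star v₁) * star L‖ ≤ 1 * δ * C := by
      refine (norm_mul3_le' _ _ _).trans ?_
      have hsl : ‖star L‖ = C := norm_star L
      rw [hsl]
      exact mul_le_mul_of_nonneg_right
        (mul_le_mul hrnorm h01.le (norm_nonneg _) zero_le_one) hC0
    calc ‖(r * v₀) * (r * a * r - a) * (star v₁ * star L) + r * (v₀ * a * star v₁) * star L‖
        ≤ ‖(r * v₀) * (r * a * r - a) * (star v₁ * star L)‖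
          + ‖r * (v₀ * a * star v₁) * star L‖ := norm_add_le _ _
      _ ≤ ‖v₀‖ * η * (‖v₁‖*C) + 1 * δ * C := add_le_add b1 b2
      _ < ε := by
          have s1 : ‖v₀‖ * η * (‖v₁‖*C) ≤ ε/4 := by
            have e1 : ‖v₀‖ * η * (‖v₁‖*C) = (C * (‖v₀‖*‖v₁‖)) * η := by ring
            have e2 : C * (‖v₀‖*‖v₁‖) ≤ K*D :=
              mul_le_mul hCK hv01D (by positivity) hKpos.le
            rw [e1, ← hKDη]
            exact mul_le_mul_of_nonneg_right e2 hηpos.le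
          have s2 : (1:ℝ) * δ * C ≤ ε/4 := by
            have e1 : (1:ℝ) * δ * C = C * δ := by ring
            rw [e1, ← hKδ]
            exact mul_le_mul_of_nonneg_right hCK hδpos.le
          linarith
  have G10 : ‖w₁ * a * star w₀‖ < ε := by
    have key : w₁ * a * star w₀
        = (L * v₁) * (r * a * r - a) * (star v₀ * r)
          + L * (v₁ * a * star v₀) * r := by
      rw [hw₀, hw₁, hL]
      simp only [star_mul, star_star, hrstar, hsa]
      noncomm_ring
    rw [key]
    have b1 : ‖(L * v₁) * (r * a * r - a) * (star v₀ * r)‖ ≤ (C*‖v₁‖) * η * ‖v₀‖ := by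
      refine (norm_mul3_le' _ _ _).trans ?_
      exact mul_le_mul (mul_le_mul hLv₁ hra (norm_nonneg _) (by positivity)) hv₀r
        (norm_nonneg _) (by positivity)
    have b2 : ‖L * (v₁ * a * star v₀) * r‖ ≤ C * δ * 1 := by
      refine (norm_mul3_le' _ _ _).trans ?_
      exact mul_le_mul (mul_le_mul le_rfl h10.le (norm_nonneg _) hC0) hrnorm
        (norm_nonneg _) (by positivity)
    calc ‖(L * v₁) * (r * a * r - a) * (star v₀ * r) + L * (v₁ * a * star v₀) * r‖
        ≤ ‖(L * v₁) * (r * a * r - a) * (star v₀ * r)‖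
          + ‖L * (v₁ * a * star v₀) * r‖ := norm_add_le _ _
      _ ≤ (C*‖v₁‖) * η * ‖v₀‖ + C * δ * 1 := add_le_add b1 b2
      _ < ε := by
          have s1 : (C*‖v₁‖) * η * ‖v₀‖ ≤ ε/4 := by
            have e1 : (C*‖v₁‖) * η * ‖v₀‖ = (C * (‖v₀‖*‖v₁‖)) * η := by ring
            have e2 : C * (‖v₀‖*‖v₁‖) ≤ K*D :=
              mul_le_mul hCK hv01D (by positivity) hKpos.le
            rw [e1, ← hKDη]
            exact mul_le_mul_of_nonneg_right e2 hηpos.le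
          have s2 : C * δ * 1 ≤ ε/4 := by
            have e1 : C * δ * 1 = C * δ := by ring
            rw [e1, ← hKδ]
            exact mul_le_mul_of_nonneg_right hCK hδpos.le
          linarith
  refine ⟨Matrix.of ![![w₀, 0], ![w₁, 0]], ?_, ?_⟩
  · intro i j
    fin_cases i <;> fin_cases j <;> simp only [Matrix.of_apply, Matrix.cons_val_zero,
      Matrix.cons_val_one, Matrix.head_cons, Matrix.head_fin_const]
    · exact hw₀B
    · exact hB.2.1
    · exact hw₁B
    · exact hB.2.1
  · intro i j
    rw [Matrix.sub_apply, entry_eq']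
    fin_cases i <;> fin_cases j <;>
      simp only [Matrix.of_apply, Matrix.cons_val_zero, Matrix.cons_val_one, Matrix.head_cons,
        Matrix.head_fin_const, Fin.isValue]
    · simpa [diag2] using G00
    · simpa [diag2] using G01
    · simpa [diag2] using G10
    · simpa [diag2] using G11
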